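/- Fix integers K ≥ 1 and 1 ≤ i ≤ K, a real δ ∈ [0,1) and a real N > 0. Define β_j = 1 − δ^{K−j+1} for i ≤ j ≤ K and α_{l→j} = δ^{K−j+1}(1−δ)^{j−l} for l < j, define the GGT subphase lengths recursively by t_i = N/β_i and t_j = (1/β_j) Σ_{l=i}^{j−1} C(j−1, l−1) t_l α_{l→j} for i < j ≤ K, and set U_j = Σ_{l=i}^{j} C(j−1, l−1) t_l. Then for every j with i < j ≤ K: β_j · U_j = Σ_{l=1}^{j−i} (−1)^{l+1} C(j−1, l) β_{j−l} U_{j−l}, where C(·,·) denotes the binomial coefficient. -/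

import Mathlib

open Finset

/-- Trinomial coefficient swap: `C(j-1,l-1)·C(j-l,m) = C(j-1,m)·C(j-m-1,l-1)`. -/
private lemma ggt_choose_swap {j l m : ℕ} (hl : 1 ≤ l) (hm : 1 ≤ m) (hlm : l + m ≤ j) :
    (j - 1).choose (l - 1) * (j - l).choose m
      = (j - 1).choose m * (j - m - 1).choose (l - 1) := by
  have h1 : (j - 1).choose (j - l) = (j - 1).choose (l - 1) := by
    have e : j - l = (j - 1) - (l - 1) := by omega
    rw [e, Nat.choose_symm (by omega)]
  have h2 : (j - 1 - m).choose (j - l - m) = (j - m - 1).choose (l - 1) := by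
    have e1 : j - 1 - m = j - m - 1 := by omega
    have e2 : j - l - m = (j - m - 1) - (l - 1) := by omega
    rw [e1, e2, Nat.choose_symm (by omega)]
  have h := Nat.choose_mul (n := j - 1) (k := j - l) (s := m) (by omega)
  rw [h1] at h
  rw [h, h2]

/-- Alternating binomial expansion: `1 - δ^e + δ^e (1-δ)^n
  = Σ_{m=1}^n (-1)^{m+1} C(n,m) (1 - δ^{e+m})`. -/
private lemma ggt_alt_sum (δ : ℝ) (e n : ℕ) (hn : 1 ≤ n) :
    1 - δ ^ e + δ ^ e * (1 - δ) ^ n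
      = ∑ m ∈ Icc 1 n, (-1 : ℝ) ^ (m + 1) * (n.choose m : ℝ) * (1 - δ ^ (e + m)) := by
  have hins : Finset.range (n + 1) = insert 0 (Finset.Icc 1 n) := by
    ext x; simp only [Finset.mem_range, Finset.mem_insert, Finset.mem_Icc]; omega
  have h0 : ∑ m ∈ Finset.range (n + 1), (-1 : ℝ) ^ m * (n.choose m : ℝ) = 0 := by
    have h := Int.alternating_sum_range_choose_of_ne (show n ≠ 0 by omega)
    have h' := congrArg (fun z : ℤ => (z : ℝ)) h
    push_cast at h'
    simpa using h'
  have h1 : ∑ m ∈ Finset.Icc 1 n, (-1 : ℝ) ^ m * (n.choose m : ℝ) = -1 := by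
    rw [hins, Finset.sum_insert (by simp)] at h0
    simp only [pow_zero, Nat.choose_zero_right, Nat.cast_one, one_mul] at h0
    linarith
  have h2 : ∑ m ∈ Finset.Icc 1 n, (-δ) ^ m * (n.choose m : ℝ) = (1 - δ) ^ n - 1 := by
    have hp := add_pow (-δ) (1 : ℝ) n
    simp only [one_pow, mul_one] at hp
    rw [hins, Finset.sum_insert (by simp)] at hp
    have e' : (-δ + 1 : ℝ) = 1 - δ := by ring
    rw [e'] at hp
    simp only [pow_zero, Nat.choose_zero_right, Nat.cast_one, one_mul] at hp
    linarith
  have key : ∑ m ∈ Icc 1 n, (-1 : ℝ) ^ (m + 1) * (n.choose m : ℝ) * (1 - δ ^ (e + m))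
      = ∑ m ∈ Icc 1 n,
          (-((-1 : ℝ) ^ m * (n.choose m : ℝ)) + δ ^ e * ((-δ) ^ m * (n.choose m : ℝ))) := by
    refine Finset.sum_congr rfl fun m _ => ?_
    rw [pow_succ, pow_add, neg_pow]
    ring
  rw [key, Finset.sum_add_distrib, Finset.sum_neg_distrib, ← Finset.mul_sum, h1, h2]
  ring

/-- Alternating-sign recurrence for the grouped GGT subphase
lengths `U_j = Σ_{l=i}^j C(j-1,l-1) t_l`: for all `i < j ≤ K`,
`β_j U_j = Σ_{l=1}^{j-i} (-1)^{l+1} C(j-1,l) β_{j-l} U_{j-l}`. -/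
theorem ggt_alternating_recurrence (K i : ℕ) (hi : 1 ≤ i) (hiK : i ≤ K)
    (δ N : ℝ) (hδ0 : 0 ≤ δ) (hδ1 : δ < 1) (hN : 0 < N)
    (β : ℕ → ℝ) (hβ : ∀ j, i ≤ j → j ≤ K → β j = 1 - δ ^ (K - j + 1))
    (α : ℕ → ℕ → ℝ) (hα : ∀ l j, l < j → α l j = δ ^ (K - j + 1) * (1 - δ) ^ (j - l))
    (t : ℕ → ℝ) (hti : t i = N / β i)
    (htj : ∀ j, i < j → j ≤ K →
      t j = (1 / β j) * ∑ l ∈ Finset.Icc i (j - 1), (Nat.choose (j - 1) (l - 1) : ℝ) * t l * α l j)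
    (U : ℕ → ℝ)
    (hU : ∀ j, i ≤ j → j ≤ K →
      U j = ∑ l ∈ Finset.Icc i j, (Nat.choose (j - 1) (l - 1) : ℝ) * t l) :
    ∀ j, i < j → j ≤ K →
      β j * U j
        = ∑ l ∈ Finset.Icc 1 (j - i), (-1 : ℝ) ^ (l + 1) * (Nat.choose (j - 1) l : ℝ)
            * β (j - l) * U (j - l) := by
  intro j hij hjK
  have hβj : β j = 1 - δ ^ (K - j + 1) := hβ j hij.le hjK
  have hβjne : β j ≠ 0 := by
    rw [hβj]
    have : δ ^ (K - j + 1) < 1 := pow_lt_one₀ hδ0 hδ1 (by omega)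
    linarith
  -- the doubly-indexed summand
  set g : ℕ → ℕ → ℝ := fun l m =>
    (-1 : ℝ) ^ (m + 1) * ((j - 1).choose m : ℝ)
      * (β (j - m) * (((j - m - 1).choose (l - 1) : ℝ) * t l)) with hg
  -- Step A : β j * U j = Σ_{l=i}^{j-1} C(j-1,l-1) t_l (β j + α l j)
  have hsplit : ∑ l ∈ Icc i j, (((j - 1).choose (l - 1) : ℝ)) * t l
      = (∑ l ∈ Icc i (j - 1), (((j - 1).choose (l - 1) : ℝ)) * t l)
        + (((j - 1).choose (j - 1) : ℝ)) * t j := by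
    have hins : Icc i j = insert j (Icc i (j - 1)) := by
      ext x; simp only [mem_Icc, mem_insert]; omega
    rw [hins, Finset.sum_insert (by simp only [mem_Icc]; omega)]
    ring
  have hstepA : β j * U j
      = ∑ l ∈ Icc i (j - 1), ((j - 1).choose (l - 1) : ℝ) * t l * (β j + α l j) := by
    rw [hU j hij.le hjK, hsplit, Nat.choose_self, Nat.cast_one, one_mul, mul_add,
      htj j hij hjK, ← mul_assoc, mul_one_div, div_self hβjne, one_mul,
      Finset.mul_sum, ← Finset.sum_add_distrib]
    exact Finset.sum_congr rfl fun l _ => by ring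
  -- Step B : pointwise expansion of β j + α l j
  have hstepB : ∀ l ∈ Icc i (j - 1),
      ((j - 1).choose (l - 1) : ℝ) * t l * (β j + α l j)
        = ∑ m ∈ Icc 1 (j - l), g l m := by
    intro l hl
    simp only [mem_Icc] at hl
    have hlj : l < j := by omega
    have hβα : β j + α l j
        = ∑ m ∈ Icc 1 (j - l), (-1 : ℝ) ^ (m + 1) * ((j - l).choose m : ℝ) * β (j - m) := by
      rw [hβj, hα l j hlj, ggt_alt_sum δ (K - j + 1) (j - l) (by omega)]
      refine Finset.sum_congr rfl fun m hm => ?_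
      simp only [mem_Icc] at hm
      rw [hβ (j - m) (by omega) (by omega)]
      congr 3
      omega
    rw [hβα, Finset.mul_sum]
    refine Finset.sum_congr rfl fun m hm => ?_
    simp only [mem_Icc] at hm
    have hc : ((j - 1).choose (l - 1) : ℝ) * ((j - l).choose m : ℝ)
        = ((j - 1).choose m : ℝ) * ((j - m - 1).choose (l - 1) : ℝ) := by
      exact_mod_cast congrArg (Nat.cast : ℕ → ℝ)
        (ggt_choose_swap (j := j) (l := l) (m := m) (by omega) hm.1 (by omega))
    simp only [hg]
    linear_combination (t l * (-1 : ℝ) ^ (m + 1) * β (j - m)) * hc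
  -- Step C : swap the order of summation
  have hswap : ∑ l ∈ Icc i (j - 1), ∑ m ∈ Icc 1 (j - l), g l m
      = ∑ m ∈ Icc 1 (j - i), ∑ l ∈ Icc i (j - m), g l m := by
    have e1 : ∀ l ∈ Icc i (j - 1),
        Icc 1 (j - l) = (Icc 1 (j - i)).filter (fun m => l + m ≤ j) := by
      intro l hl
      simp only [mem_Icc] at hl
      ext m; simp only [mem_Icc, mem_filter]; omega
    have e2 : ∀ m ∈ Icc 1 (j - i),
        Icc i (j - m) = (Icc i (j - 1)).filter (fun l => l + m ≤ j) := by
      intro m hm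
      simp only [mem_Icc] at hm
      ext l; simp only [mem_Icc, mem_filter]; omega
    calc ∑ l ∈ Icc i (j - 1), ∑ m ∈ Icc 1 (j - l), g l m
        = ∑ l ∈ Icc i (j - 1), ∑ m ∈ Icc 1 (j - i), if l + m ≤ j then g l m else 0 := by
          refine Finset.sum_congr rfl fun l hl => ?_
          rw [e1 l hl, Finset.sum_filter]
      _ = ∑ m ∈ Icc 1 (j - i), ∑ l ∈ Icc i (j - 1), if l + m ≤ j then g l m else 0 :=
          Finset.sum_comm
      _ = ∑ m ∈ Icc 1 (j - i), ∑ l ∈ Icc i (j - m), g l m := by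
          refine Finset.sum_congr rfl fun m hm => ?_
          rw [e2 m hm, Finset.sum_filter]
  -- Step D : unfold U (j-m) on the right-hand side
  have hRHS : ∑ m ∈ Finset.Icc 1 (j - i), (-1 : ℝ) ^ (m + 1) * (Nat.choose (j - 1) m : ℝ)
        * β (j - m) * U (j - m)
      = ∑ m ∈ Icc 1 (j - i), ∑ l ∈ Icc i (j - m), g l m := by
    refine Finset.sum_congr rfl fun m hm => ?_
    simp only [mem_Icc] at hm
    rw [hU (j - m) (by omega) (by omega), Finset.mul_sum]
    refine Finset.sum_congr rfl fun l _ => ?_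
    simp only [hg]
    ring
  calc β j * U j
      = ∑ l ∈ Icc i (j - 1), ((j - 1).choose (l - 1) : ℝ) * t l * (β j + α l j) := hstepA
    _ = ∑ l ∈ Icc i (j - 1), ∑ m ∈ Icc 1 (j - l), g l m := Finset.sum_congr rfl hstepB
    _ = ∑ m ∈ Icc 1 (j - i), ∑ l ∈ Icc i (j - m), g l m := hswap
    _ = _ := hRHS.symm
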